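/- In the PB setting with dichotomous preferences where all voters approve all candidates, an outcome satisfies CPSC if and only if it is a maximum-weight feasible subset (knapsack optimum): W ⊆ C with w(W) ≤ L and w(W) ≥ w(C') for all C' ⊆ C with w(C') ≤ L. -/
import Mathlib


open Finset
open scoped Classical

noncomputable section

/-- Each voter's weak preference relation `pref i` is a total preorder. -/
def TotalPreorder {V C : Type} (pref : V → C → C → Prop) : Prop :=
  (∀ i a b, pref i a b ∨ pref i b a) ∧
  (∀ i a b c, pref i a b → pref i b c → pref i a c)

/-- `nth i j` is voter `i`'s `(j+1)`-th most preferred candidate under a fixed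
tie-breaking: an enumeration of all candidates consistent with `pref i`. -/
def TieBreak {V C : Type} [Fintype C] (pref : V → C → C → Prop) (nth : V → ℕ → C) : Prop :=
  (∀ i c, ∃ j, j < Fintype.card C ∧ nth i j = c) ∧
  (∀ i j j', j ≤ j' → pref i (nth i j) (nth i j'))

/-- `N'` solidly supports `C'`: every voter in `N'` weakly prefers every member of `C'`
to every non-member. -/
def Solid {V C : Type} (pref : V → C → C → Prop) (N' : Finset V) (C' : Finset C) : Prop :=
  ∀ i ∈ N', ∀ c' ∈ C', ∀ c, c ∉ C' → pref i c' c

/-- `P(N',C') = {c : ∃ i ∈ N', c ≿_i c^{(i,|C'|)}}` where `c^{(i,j)} = nth i (j-1)`. -/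
def Pset {V C : Type} [Fintype C] (pref : V → C → C → Prop) (nth : V → ℕ → C)
    (N' : Finset V) (C' : Finset C) : Finset C :=
  Finset.univ.filter fun c => ∃ i ∈ N', pref i c (nth i (C'.card - 1))

/-- total cost of a set of candidates -/
def cost {C : Type} (w : C → ℝ) (S : Finset C) : ℝ := ∑ c ∈ S, w c

/-- Comparative PSC for PB with general (weak) preferences. -/
def CPSC {V C : Type} [Fintype V] [Fintype C] (pref : V → C → C → Prop) (nth : V → ℕ → C)
    (b : V → ℝ) (w : C → ℝ) (L : ℝ) (W : Finset C) : Prop :=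
  ¬ ∃ (N' : Finset V) (C' : Finset C), Solid pref N' C' ∧
      cost w (Pset pref nth N' C' ∩ W) < (∑ i ∈ N', b i) * L / (Fintype.card V : ℝ) ∧
      ∃ C'' ⊆ C', cost w (Pset pref nth N' C' ∩ W) < cost w C'' ∧
        cost w C'' ≤ (∑ i ∈ N', b i) * L / (Fintype.card V : ℝ)

/-- Inclusion PSC for PB with general (weak) preferences. -/
def IPSC {V C : Type} [Fintype V] [Fintype C] (pref : V → C → C → Prop) (nth : V → ℕ → C)
    (b : V → ℝ) (w : C → ℝ) (L : ℝ) (W : Finset C) : Prop :=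
  ¬ ∃ (N' : Finset V) (C' : Finset C), Solid pref N' C' ∧
      cost w (Pset pref nth N' C' ∩ W) < (∑ i ∈ N', b i) * L / (Fintype.card V : ℝ) ∧
      ∃ c ∈ C', c ∉ Pset pref nth N' C' ∩ W ∧
        cost w (insert c (Pset pref nth N' C' ∩ W)) ≤ (∑ i ∈ N', b i) * L / (Fintype.card V : ℝ)

/-- `W` is exhaustive w.r.t. budget limit `L`. -/
def Exhaustive {C : Type} (w : C → ℝ) (L : ℝ) (W : Finset C) : Prop :=
  cost w W ≤ L ∧ ∀ c, c ∉ W → L < cost w (insert c W)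

/-- `W` is a maximal cost outcome w.r.t. budget limit `L`. -/
def MaximalCost {C : Type} (w : C → ℝ) (L : ℝ) (W : Finset C) : Prop :=
  cost w W ≤ L ∧ ∀ C' : Finset C, cost w C' ≤ L → cost w C' ≤ cost w W

/-- dichotomous preferences with approval sets `A i` -/
def Dichotomous {V C : Type} (pref : V → C → C → Prop) (A : V → Finset C) : Prop :=
  ∀ i a c, pref i a c ↔ (a ∈ A i ∨ c ∉ A i)

/-- `⋃_{i ∈ N'} A i` -/
def unionA {V C : Type} [Fintype C] (A : V → Finset C) (N' : Finset V) : Finset C :=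
  Finset.univ.filter fun c => ∃ i ∈ N', c ∈ A i

/-- `⋂_{i ∈ N'} A i` -/
def interA {V C : Type} [Fintype C] (A : V → Finset C) (N' : Finset V) : Finset C :=
  Finset.univ.filter fun c => ∀ i ∈ N', c ∈ A i

/-- when every voter is indifferent among all candidates (approves
everything), CPSC is equivalent to being a maximum-weight feasible (knapsack
optimal) outcome. -/
theorem cpsc_iff_knapsack {V C : Type} [Fintype V] [Fintype C] [Nonempty V]
    (pref : V → C → C → Prop) (nth : V → ℕ → C) (b : V → ℝ) (w : C → ℝ) (L : ℝ)
    (hall : ∀ i a c, pref i a c)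
    (hnth : TieBreak pref nth)
    (hb : ∀ i, 0 < b i) (hbsum : (∑ i, b i) = (Fintype.card V : ℝ))
    (hw : ∀ c, 0 < w c) (hL : 0 < L)
    (W : Finset C) (hWL : cost w W ≤ L) :
    CPSC pref nth b w L W ↔ MaximalCost w L W := by
  have hn : (0 : ℝ) < (Fintype.card V : ℝ) := by
    exact_mod_cast Fintype.card_pos
  have hPuniv : ∀ N' : Finset V, N'.Nonempty → ∀ C' : Finset C,
      Pset pref nth N' C' = Finset.univ := by
    intro N' ⟨i, hi⟩ C'
    ext c
    simp only [Pset, Finset.mem_filter, Finset.mem_univ, true_and, iff_true]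
    exact ⟨i, hi, hall _ _ _⟩
  have hcostnn : ∀ S : Finset C, 0 ≤ cost w S := fun S =>
    Finset.sum_nonneg fun c _ => (hw c).le
  constructor
  · intro hC
    refine ⟨hWL, ?_⟩
    intro C' hC'
    by_contra h
    push_neg at h
    apply hC
    have hP : Pset pref nth Finset.univ Finset.univ ∩ W = W := by
      rw [hPuniv _ Finset.univ_nonempty _, Finset.univ_inter]
    have hbL : (∑ i ∈ Finset.univ, b i) * L / (Fintype.card V : ℝ) = L := by
      rw [hbsum]; field_simp
    refine ⟨Finset.univ, Finset.univ, ?_, ?_, C', Finset.subset_univ _, ?_, ?_⟩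
    · intro i _ c' _ c hc; exact hall _ _ _
    · rw [hP, hbL]; exact lt_of_lt_of_le h hC'
    · rw [hP]; exact h
    · rw [hbL]; exact hC'
  · rintro ⟨hW, hmax⟩ ⟨N', C', hsolid, h1, C'', hsub, h2, h3⟩
    have hbound : (∑ i ∈ N', b i) * L / (Fintype.card V : ℝ) ≤ L := by
      rw [div_le_iff₀ hn]
      have : (∑ i ∈ N', b i) ≤ (Fintype.card V : ℝ) := by
        rw [← hbsum]
        exact Finset.sum_le_sum_of_subset_of_nonneg (Finset.subset_univ _)
          (fun i _ _ => (hb i).le)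
      calc (∑ i ∈ N', b i) * L ≤ (Fintype.card V : ℝ) * L :=
            mul_le_mul_of_nonneg_right this hL.le
        _ = L * (Fintype.card V : ℝ) := mul_comm _ _
    rcases N'.eq_empty_or_nonempty with rfl | hne
    · simp only [Finset.sum_empty, zero_mul, zero_div] at h1
      exact absurd h1 (not_lt.mpr (hcostnn _))
    · have hP : Pset pref nth N' C' ∩ W = W := by
        rw [hPuniv _ hne _, Finset.univ_inter]
      rw [hP] at h2
      exact absurd (h2.trans_le (hmax _ (h3.trans hbound))) (lt_irrefl _)
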